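/- Let ρ ∈ (0,1] and let A be a maximal (ρ/5)-separated subset of T². Then for every finite Borel measure ν on T², ‖ν‖²_ρ ≥ (π / (4·19²·C₀·ρ²)) · Σ_{z∈A} ν(B(z,ρ/4))². -/

import Mathlib

open MeasureTheory Metric Filter Topology
open scoped ENNReal

/-- The flat two-torus `ℝ²/ℤ²`, realized as the `L²`-product of two circles of length one. -/
abbrev T2 : Type := PiLp 2 fun _ : Fin 2 => AddCircle (1 : ℝ)

noncomputable instance : MeasurableSpace T2 := borel T2
instance : BorelSpace T2 := ⟨rfl⟩
instance : CompactSpace T2 := (PiLp.homeomorph 2 fun _ : Fin 2 => AddCircle (1 : ℝ)).symm.compactSpace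

/-- The condition `C₀⁻¹ ≤ dm/dLeb ≤ C₀` for the smooth measure `m` in terms of the Haar
probability measure `Leb`. -/
def DensityBounds (C₀ : ℝ) (Leb m : Measure T2) : Prop :=
  ∀ s : Set T2, MeasurableSet s →
    ENNReal.ofReal C₀⁻¹ * Leb s ≤ m s ∧ m s ≤ ENNReal.ofReal C₀ * Leb s

/-- The `ρ`-inner product `⟨ν,ν'⟩_ρ = ρ⁻⁴ ∫ ν(B(z,ρ)) ν'(B(z,ρ)) dm(z)`. -/
noncomputable def rinner (m ν ν' : Measure T2) (ρ : ℝ) : ℝ :=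
  (1 / ρ ^ 4) * ∫ z, (ν (ball z ρ)).toReal * (ν' (ball z ρ)).toReal ∂m

/-- The `ρ`-semi-norm `‖ν‖_ρ = ⟨ν,ν⟩_ρ^{1/2}`. -/
noncomputable def rnorm (m ν : Measure T2) (ρ : ℝ) : ℝ :=
  Real.sqrt (rinner m ν ν ρ)

/-- A set is `s`-separated if any two distinct points of it are at distance greater than `s`. -/
def IsSeparated' (s : ℝ) (A : Set T2) : Prop :=
  A.Pairwise fun x y => s < dist x y

-- helper 1: measurability of y ↦ ν (ball y r)
lemma meas_ball_fun (ν : Measure T2) [SFinite ν] (r : ℝ) :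
    Measurable fun y : T2 => ν (ball y r) := by
  have hs : MeasurableSet {p : T2 × T2 | dist p.2 p.1 < r} := by
    have : IsOpen {p : T2 × T2 | dist p.2 p.1 < r} :=
      isOpen_lt (by continuity) continuous_const
    exact this.measurableSet
  have h := measurable_measure_prodMk_left (ν := ν) hs
  have he : (fun y : T2 => ν (ball y r))
      = fun y => ν (Prod.mk y ⁻¹' {p : T2 × T2 | dist p.2 p.1 < r}) := by
    funext y
    have : Prod.mk y ⁻¹' {p : T2 × T2 | dist p.2 p.1 < r} = ball y r := by
      ext w; simp [Metric.mem_ball]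
    rw [this]
  rw [he]; exact h

-- helper 2: dist on AddCircle bounded by real dist
lemma addCircle_dist_le (a b : ℝ) :
    dist (↑a : AddCircle (1 : ℝ)) (↑b) ≤ |a - b| := by
  rw [dist_eq_norm]
  rw [← AddCircle.coe_sub]
  simpa using QuotientAddGroup.norm_mk_le_norm (S := AddSubgroup.zmultiples (1:ℝ)) (m := a - b)

-- helper 3: grid points on AddCircle
lemma addCircle_exists_near (n : ℕ) (hn : 0 < n) (x : AddCircle (1 : ℝ)) :
    ∃ i : Fin n, dist x ↑((i : ℝ) / n) ≤ 1 / (2 * n) := by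
  obtain ⟨t, rfl⟩ := QuotientAddGroup.mk_surjective x
  set j : ℤ := round ((n : ℝ) * t) with hj
  have hmod0 : (0 : ℤ) ≤ j % n := Int.emod_nonneg j (by exact_mod_cast hn.ne')
  have hmodlt : j % n < n := Int.emod_lt_of_pos j (by exact_mod_cast hn)
  have hn' : (n : ℝ) ≠ 0 := Nat.cast_ne_zero.mpr hn.ne'
  have hnpos : (0:ℝ) < n := by exact_mod_cast hn
  refine ⟨⟨(j % n).toNat, by omega⟩, ?_⟩
  have hid : (n:ℤ) * (j / n) + j % n = j := Int.mul_ediv_add_emod j n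
  have hidR : (n:ℝ) * ((j / (n:ℤ) : ℤ) : ℝ) + ((j % (n:ℤ) : ℤ) : ℝ) = (j : ℝ) := by
    exact_mod_cast congrArg (fun z : ℤ => (z : ℝ)) hid
  have hcoe : (↑((((j % n).toNat : ℕ) : ℝ) / n) : AddCircle (1 : ℝ)) = ↑((j : ℝ) / n) := by
    rw [QuotientAddGroup.eq_iff_sub_mem, AddSubgroup.mem_zmultiples_iff]
    refine ⟨-(j / n), ?_⟩
    rw [zsmul_eq_mul]
    have htn : (((j % n).toNat : ℕ) : ℝ) = ((j % (n:ℤ) : ℤ) : ℝ) := by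
      exact_mod_cast congrArg (fun z : ℤ => (z : ℝ)) (Int.toNat_of_nonneg hmod0)
    push_cast
    rw [htn]
    field_simp
    linarith [hidR]
  show dist (↑t : AddCircle (1:ℝ)) ↑((((j % n).toNat : ℕ) : ℝ) / n) ≤ 1 / (2 * n)
  rw [hcoe]
  calc dist (↑t : AddCircle (1:ℝ)) ↑((j : ℝ) / n) ≤ |t - (j:ℝ)/n| := addCircle_dist_le _ _
    _ = |(n:ℝ) * t - j| / n := by
        rw [show t - (j:ℝ)/n = ((n:ℝ)*t - j)/n by field_simp, abs_div, abs_of_pos hnpos]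
    _ ≤ (1/2) / n := by
        gcongr
        exact abs_sub_round _
    _ = 1 / (2 * n) := by ring

noncomputable def grid (n : ℕ) (c : Fin n × Fin n) : T2 :=
  WithLp.toLp 2 fun k : Fin 2 => (↑((if k = 0 then ((c.1 : ℕ) : ℝ) else ((c.2 : ℕ) : ℝ)) / n) : AddCircle (1:ℝ))

lemma T2_cover (n : ℕ) (hn : 0 < n) (r : ℝ) (hr : Real.sqrt 2 / (2 * n) < r) (z : T2) :
    ∃ c : Fin n × Fin n, z ∈ ball (grid n c) r := by
  obtain ⟨i, hi⟩ := addCircle_exists_near n hn (z 0)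
  obtain ⟨j, hj⟩ := addCircle_exists_near n hn (z 1)
  refine ⟨(i, j), ?_⟩
  rw [mem_ball]
  have hnpos : (0:ℝ) < n := by exact_mod_cast hn
  have h0 : grid n (i, j) 0 = ↑(((i:ℕ):ℝ) / n) := by simp [grid]
  have h1 : grid n (i, j) 1 = ↑(((j:ℕ):ℝ) / n) := by simp [grid]
  have hd : dist z (grid n (i, j))
      = Real.sqrt (dist (z 0) (grid n (i,j) 0) ^ 2 + dist (z 1) (grid n (i,j) 1) ^ 2) := by
    rw [PiLp.dist_eq_sum (by norm_num : 0 < (2:ℝ≥0∞).toReal)]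
    simp only [ENNReal.toReal_ofNat, Fin.sum_univ_two, Real.rpow_two]
    rw [← Real.sqrt_eq_rpow]
  rw [hd, h0, h1]
  have hb : dist (z 0) (↑(((i:ℕ):ℝ) / n)) ^ 2 + dist (z 1) (↑(((j:ℕ):ℝ) / n)) ^ 2
      ≤ 2 * (1 / (2*n))^2 := by
    have d0 := dist_nonneg (x := z 0) (y := (↑(((i:ℕ):ℝ) / n) : AddCircle (1:ℝ)))
    have d1 := dist_nonneg (x := z 1) (y := (↑(((j:ℕ):ℝ) / n) : AddCircle (1:ℝ)))
    nlinarith [hi, hj]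
  calc Real.sqrt (dist (z 0) (↑(((i:ℕ):ℝ) / n)) ^ 2 + dist (z 1) (↑(((j:ℕ):ℝ) / n)) ^ 2)
      ≤ Real.sqrt (2 * (1 / (2*n))^2) := Real.sqrt_le_sqrt hb
    _ = Real.sqrt 2 * (1 / (2*n)) := by
        rw [Real.sqrt_mul (by norm_num), Real.sqrt_sq (by positivity)]
    _ = Real.sqrt 2 / (2 * n) := by ring
    _ < r := hr

lemma haar_ball_ge (Leb : Measure T2) [IsProbabilityMeasure Leb] [Leb.IsAddHaarMeasure]
    (n : ℕ) (hn : 0 < n) (r : ℝ) (hr : Real.sqrt 2 / (2 * n) < r) (z : T2) :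
    (1 : ℝ≥0∞) ≤ (n : ℝ≥0∞) ^ 2 * Leb (ball z r) := by
  have hcov : (Set.univ : Set T2) ⊆ ⋃ c : Fin n × Fin n, ball (grid n c) r := by
    intro x _
    obtain ⟨c, hc⟩ := T2_cover n hn r hr x
    exact Set.mem_iUnion.2 ⟨c, hc⟩
  calc (1:ℝ≥0∞) = Leb Set.univ := measure_univ.symm
    _ ≤ Leb (⋃ c : Fin n × Fin n, ball (grid n c) r) := measure_mono hcov
    _ ≤ ∑ c : Fin n × Fin n, Leb (ball (grid n c) r) := measure_iUnion_fintype_le _ _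
    _ = ∑ _c : Fin n × Fin n, Leb (ball z r) := by
        refine Finset.sum_congr rfl fun c _ => ?_
        rw [Measure.addHaar_ball_center, Measure.addHaar_ball_center Leb z]
    _ = (n : ℝ≥0∞) ^ 2 * Leb (ball z r) := by
        simp [Finset.sum_const, Fintype.card_prod, mul_comm, pow_two, mul_assoc]

lemma key_finset
    (C₀ : ℝ) (hC₀ : 1 ≤ C₀) (Leb m : Measure T2)
    [IsProbabilityMeasure Leb] [Leb.IsAddHaarMeasure]
    [IsProbabilityMeasure m] (hm : DensityBounds C₀ Leb m)
    (ρ : ℝ) (hρ : 0 < ρ) (A : Set T2)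
    (hsep : IsSeparated' (ρ / 5) A)
    (ν : Measure T2) [IsFiniteMeasure ν]
    (n : ℕ) (hn : 0 < n) (hrn : Real.sqrt 2 / (2 * n) < ρ / 10)
    (F : Finset T2) (hF : ↑F ⊆ A) :
    ∑ z ∈ F, (C₀⁻¹ / (n : ℝ) ^ 2) * (ν (ball z (ρ/4))).toReal ^ 2
      ≤ ∫ y, (ν (ball y ρ)).toReal * (ν (ball y ρ)).toReal ∂m := by
  set g : T2 → ℝ := fun y => (ν (ball y ρ)).toReal with hg_def
  have hnpos : (0:ℝ) < n := by exact_mod_cast hn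
  have hg : Measurable g := (meas_ball_fun ν ρ).ennreal_toReal
  have hgnn : ∀ y, 0 ≤ g y := fun y => ENNReal.toReal_nonneg
  have hgb : ∀ y, g y ≤ (ν Set.univ).toReal := fun y =>
    ENNReal.toReal_mono (measure_ne_top ν _) (measure_mono (Set.subset_univ _))
  have hint : Integrable (fun y => g y * g y) m := by
    refine (integrable_const ((ν Set.univ).toReal * (ν Set.univ).toReal)).mono'
      ((hg.mul hg).aestronglyMeasurable) ?_
    filter_upwards with y
    rw [Real.norm_eq_abs, abs_of_nonneg (mul_nonneg (hgnn y) (hgnn y))]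
    exact mul_le_mul (hgb y) (hgb y) (hgnn y) ENNReal.toReal_nonneg
  have hmB : ∀ z : T2, C₀⁻¹ / (n : ℝ) ^ 2 ≤ (m (ball z (ρ/10))).toReal := by
    intro z
    have h1 := (hm _ (measurableSet_ball (x := z) (ε := ρ/10))).1
    have h2 := haar_ball_ge Leb n hn (ρ/10) hrn z
    have h3 : ENNReal.ofReal C₀⁻¹ ≤ (n : ℝ≥0∞) ^ 2 * m (ball z (ρ/10)) := by
      calc ENNReal.ofReal C₀⁻¹ = ENNReal.ofReal C₀⁻¹ * 1 := (mul_one _).symm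
        _ ≤ ENNReal.ofReal C₀⁻¹ * ((n : ℝ≥0∞) ^ 2 * Leb (ball z (ρ/10))) :=
            mul_le_mul_right h2 _
        _ = (n : ℝ≥0∞) ^ 2 * (ENNReal.ofReal C₀⁻¹ * Leb (ball z (ρ/10))) := by ring
        _ ≤ (n : ℝ≥0∞) ^ 2 * m (ball z (ρ/10)) := mul_le_mul_right h1 _
    have hne : ((n : ℝ≥0∞) ^ 2 * m (ball z (ρ/10))) ≠ ⊤ :=
      ENNReal.mul_ne_top (by simp) (measure_ne_top m _)
    have h4 := ENNReal.toReal_mono hne h3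
    rw [ENNReal.toReal_ofReal (by positivity), ENNReal.toReal_mul] at h4
    have h5 : ((n : ℝ≥0∞) ^ 2).toReal = (n : ℝ) ^ 2 := by simp
    rw [h5] at h4
    rw [div_le_iff₀ (by positivity)]
    linarith [h4]
  have hsub : ∀ z : T2, ∀ y ∈ ball z (ρ/10), ball z (ρ/4) ⊆ ball y ρ := by
    intro z y hy w hw
    rw [mem_ball] at *
    have := dist_triangle w z y
    have hzy : dist z y < ρ/10 := by rw [dist_comm]; exact hy
    linarith
  have hperz : ∀ z ∈ F, (C₀⁻¹ / (n : ℝ) ^ 2) * (ν (ball z (ρ/4))).toReal ^ 2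
      ≤ ∫ y in ball z (ρ/10), g y * g y ∂m := by
    intro z _
    set a : ℝ := (ν (ball z (ρ/4))).toReal with ha_def
    have hann : 0 ≤ a := ENNReal.toReal_nonneg
    calc (C₀⁻¹ / (n : ℝ) ^ 2) * a ^ 2 ≤ (m (ball z (ρ/10))).toReal * a ^ 2 :=
          mul_le_mul_of_nonneg_right (hmB z) (sq_nonneg a)
      _ = ∫ _y in ball z (ρ/10), a * a ∂m := by
          rw [setIntegral_const, smul_eq_mul, pow_two]; rfl
      _ ≤ ∫ y in ball z (ρ/10), g y * g y ∂m := by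
          refine setIntegral_mono_on
            (integrableOn_const (measure_lt_top m _).ne)
            (hint.integrableOn) measurableSet_ball ?_
          intro y hy
          have hle : a ≤ g y :=
            ENNReal.toReal_mono (measure_ne_top ν _) (measure_mono (hsub z y hy))
          exact mul_le_mul hle hle hann (hgnn y)
  have hdisj : (↑F : Set T2).Pairwise (Function.onFun Disjoint fun z => ball z (ρ/10)) := by
    intro z hz z' hz' hne
    exact ball_disjoint_ball (by linarith [hsep (hF hz) (hF hz') hne])
  calc ∑ z ∈ F, (C₀⁻¹ / (n : ℝ) ^ 2) * (ν (ball z (ρ/4))).toReal ^ 2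
      ≤ ∑ z ∈ F, ∫ y in ball z (ρ/10), g y * g y ∂m := Finset.sum_le_sum hperz
    _ = ∫ y in ⋃ z ∈ F, ball z (ρ/10), g y * g y ∂m :=
        (integral_biUnion_finset F (fun z _ => measurableSet_ball) hdisj
          (fun z _ => hint.integrableOn)).symm
    _ ≤ ∫ y, g y * g y ∂m :=
        setIntegral_le_integral hint
          (Filter.Eventually.of_forall fun y => mul_nonneg (hgnn y) (hgnn y))

/-- Let `ρ ∈ (0,1]` and let `A` be a maximal `(ρ/5)`-separated subset of
`T²`.  Then for every finite Borel measure `ν` on `T²`,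
`‖ν‖²_ρ ≥ (π / (4·19²·C₀·ρ²)) · Σ_{z∈A} ν(B(z,ρ/4))²`. -/
theorem rnormSq_ge_separated_sum
    (C₀ : ℝ) (hC₀ : 1 ≤ C₀) (Leb m : Measure T2)
    [IsProbabilityMeasure Leb] [Leb.IsAddHaarMeasure]
    [IsProbabilityMeasure m] (hm : DensityBounds C₀ Leb m)
    (ρ : ℝ) (hρ : 0 < ρ) (hρ' : ρ ≤ 1) (A : Set T2)
    (hsep : IsSeparated' (ρ / 5) A)
    (hmax : ∀ B : Set T2, A ⊆ B → IsSeparated' (ρ / 5) B → B = A)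
    (ν : Measure T2) [IsFiniteMeasure ν] :
    (Real.pi / (4 * 19 ^ 2 * C₀ * ρ ^ 2)) * ∑' z : A, (ν (ball (z : T2) (ρ / 4))).toReal ^ 2 ≤
      rinner m ν ν ρ := by
  have hC₀pos : (0:ℝ) < C₀ := zero_lt_one.trans_le hC₀
  set n : ℕ := ⌈(8:ℝ)/ρ⌉₊ with hn_def
  have h8ρ : (0:ℝ) < 8/ρ := by positivity
  have hn_lb : (8:ℝ)/ρ ≤ n := Nat.le_ceil _
  have hn_pos : 0 < n := Nat.ceil_pos.mpr h8ρ
  have hnpos : (0:ℝ) < n := by exact_mod_cast hn_pos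
  have hn_ub : (n:ℝ) ≤ 9/ρ := by
    have h2 : ((⌈(8:ℝ)/ρ⌉₊ : ℝ)) < 8/ρ + 1 := Nat.ceil_lt_add_one h8ρ.le
    have h1ρ : (1:ℝ) ≤ 1/ρ := by rw [le_div_iff₀ hρ]; linarith
    have : 8/ρ + 1 ≤ 9/ρ := by
      have : 8/ρ + 1/ρ = 9/ρ := by ring
      linarith
    linarith
  have hnρ : (n:ℝ) * ρ ≤ 9 := by
    have := (le_div_iff₀ hρ).mp hn_ub
    linarith
  have hnρ0 : (0:ℝ) ≤ (n:ℝ) * ρ := by positivity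
  have hsqrt2 : Real.sqrt 2 < 1.6 := by
    have h : (1.6:ℝ) = Real.sqrt (1.6^2) := (Real.sqrt_sq (by norm_num)).symm
    rw [h]
    exact Real.sqrt_lt_sqrt (by norm_num) (by norm_num)
  have hrn : Real.sqrt 2 / (2 * n) < ρ / 10 := by
    rw [div_lt_iff₀ (by positivity)]
    have h8 : (8:ℝ) ≤ (n:ℝ) * ρ := by
      have := (div_le_iff₀ hρ).mp hn_lb
      linarith
    nlinarith
  set c : ℝ := Real.pi / (4 * 19 ^ 2 * C₀ * ρ ^ 2) with hc_def
  have hcpos : 0 < c := by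
    have := Real.pi_pos
    positivity
  have hInn : 0 ≤ ∫ y, (ν (ball y ρ)).toReal * (ν (ball y ρ)).toReal ∂m :=
    integral_nonneg fun y => mul_nonneg ENNReal.toReal_nonneg ENNReal.toReal_nonneg
  have hrin : 0 ≤ rinner m ν ν ρ := mul_nonneg (by positivity) hInn
  have hconst : c ≤ (C₀⁻¹ / (n:ℝ)^2) * (1/ρ^4) := by
    have hpi := Real.pi_le_four
    have hR : (C₀⁻¹/(n:ℝ)^2) * (1/ρ^4) = 1/(C₀ * (n:ℝ)^2 * ρ^4) := by field_simp
    rw [hc_def, hR, div_le_div_iff₀ (by positivity) (by positivity)]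
    have h81 : (n:ℝ)^2 * ρ^2 ≤ 81 := by nlinarith
    have hx : (0:ℝ) ≤ C₀ * ρ^2 := by positivity
    have hkey : Real.pi * ((n:ℝ)^2 * ρ^2) ≤ 4 * 81 := by
      have := Real.pi_pos
      nlinarith
    nlinarith [Real.pi_pos]
  have hpartial : ∀ F : Finset T2, ↑F ⊆ A →
      c * ∑ z ∈ F, (ν (ball z (ρ/4))).toReal ^ 2 ≤ rinner m ν ν ρ := by
    intro F hF
    have hkey := key_finset C₀ hC₀ Leb m hm ρ hρ A hsep ν n hn_pos hrn F hF
    rw [← Finset.mul_sum] at hkey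
    have hSnn : 0 ≤ ∑ z ∈ F, (ν (ball z (ρ/4))).toReal ^ 2 :=
      Finset.sum_nonneg fun z _ => sq_nonneg _
    calc c * ∑ z ∈ F, (ν (ball z (ρ/4))).toReal ^ 2
        ≤ ((C₀⁻¹ / (n:ℝ)^2) * (1/ρ^4)) * ∑ z ∈ F, (ν (ball z (ρ/4))).toReal ^ 2 :=
          mul_le_mul_of_nonneg_right hconst hSnn
      _ = (1/ρ^4) * ((C₀⁻¹ / (n:ℝ)^2) * ∑ z ∈ F, (ν (ball z (ρ/4))).toReal ^ 2) := by ring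
      _ ≤ (1/ρ^4) * ∫ y, (ν (ball y ρ)).toReal * (ν (ball y ρ)).toReal ∂m :=
          mul_le_mul_of_nonneg_left hkey (by positivity)
      _ = rinner m ν ν ρ := rfl
  by_cases hsum : Summable (fun z : A => (ν (ball (z : T2) (ρ/4))).toReal ^ 2)
  · have hbound : ∀ s : Finset A,
        ∑ i ∈ s, (ν (ball (i : T2) (ρ/4))).toReal ^ 2 ≤ rinner m ν ν ρ / c := by
      classical
      intro s
      rw [le_div_iff₀ hcpos]
      have hFA : ↑(s.image (Subtype.val : A → T2)) ⊆ A := by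
        intro x hx
        simp only [Finset.coe_image] at hx
        obtain ⟨i, _, rfl⟩ := hx
        exact i.2
      have hsumeq : ∑ z ∈ s.image (Subtype.val : A → T2), (ν (ball z (ρ/4))).toReal ^ 2
          = ∑ i ∈ s, (ν (ball (i : T2) (ρ/4))).toReal ^ 2 :=
        Finset.sum_image fun i _ j _ h => Subtype.ext h
      rw [← hsumeq, mul_comm]
      exact hpartial _ hFA
    have htsum := Summable.tsum_le_of_sum_le hsum hbound
    calc c * ∑' z : A, (ν (ball (z : T2) (ρ/4))).toReal ^ 2
        ≤ c * (rinner m ν ν ρ / c) := mul_le_mul_of_nonneg_left htsum hcpos.le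
      _ = rinner m ν ν ρ := by field_simp
  · rw [tsum_eq_zero_of_not_summable hsum, mul_zero]
    exact hrin
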